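/- Let X be a real Banach space, 1 < α ≤ 2, M ≥ 1, ω ≥ 0. Let T, B, S₀ : [0,∞) → L(X) be strongly continuous with ‖T(t)‖ ≤ M·e^(ωt)·t^(α−1)/Γ(α) and ‖S₀(t)‖ ≤ M·t·e^(ωt) for all t ≥ 0. Define recursively S_{n+1}(t)x = ∫₀ᵗ T(t−s) B(s) S_n(s)x ds. Then for every n ∈ ℕ and t ≥ 0, setting K_t = sup_{0≤s≤t} ‖B(s)‖, one has ‖S_n(t)x‖ ≤ M^(n+1) · K_t^n · e^(ωt) · (t^(nα+1)/Γ(nα+2)) · ‖x‖ for all x ∈ X. -/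

import Mathlib

open MeasureTheory Set intervalIntegral

private lemma cont_rpow_aux {p : ℝ} (hp : 0 < p) : Continuous fun x : ℝ => x ^ p :=
  continuous_iff_continuousAt.2 fun x => Real.continuousAt_rpow_const x p (Or.inr hp.le)

private lemma real_beta {a b t : ℝ} (ha : 0 < a) (hb : 0 < b) (ht : 0 < t) :
    ∫ s in (0:ℝ)..t, (t - s) ^ (a - 1) * s ^ (b - 1) =
      Real.Gamma a * Real.Gamma b / Real.Gamma (a + b) * t ^ (a + b - 1) := by
  have hGpos : 0 < Real.Gamma (a + b) := Real.Gamma_pos_of_pos (by positivity)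
  have hsc := Complex.betaIntegral_scaled (b : ℂ) (a : ℂ) ht
  have hGG := Complex.Gamma_mul_Gamma_eq_betaIntegral (s := (b : ℂ)) (t := (a : ℂ))
    (by simpa using hb) (by simpa using ha)
  have hbeta : Complex.betaIntegral (b : ℂ) (a : ℂ)
      = ((Real.Gamma a * Real.Gamma b / Real.Gamma (a + b) : ℝ) : ℂ) := by
    have hGab : Complex.Gamma ((b : ℂ) + (a : ℂ)) = ((Real.Gamma (a + b) : ℝ) : ℂ) := by
      rw [← Complex.ofReal_add, Complex.Gamma_ofReal, add_comm]
    have hne : ((Real.Gamma (a + b) : ℝ) : ℂ) ≠ 0 := by exact_mod_cast hGpos.ne'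
    rw [Complex.Gamma_ofReal, Complex.Gamma_ofReal, hGab] at hGG
    rw [Complex.ofReal_div, Complex.ofReal_mul, eq_div_iff hne]
    linear_combination -hGG
  have hint : ((∫ s in (0:ℝ)..t, (t - s) ^ (a - 1) * s ^ (b - 1) : ℝ) : ℂ)
      = ∫ s in (0:ℝ)..t, (s : ℂ) ^ ((b : ℂ) - 1) * ((t : ℂ) - s) ^ ((a : ℂ) - 1) := by
    rw [← intervalIntegral.integral_ofReal, intervalIntegral.integral_of_le ht.le,
      intervalIntegral.integral_of_le ht.le]
    refine setIntegral_congr_fun measurableSet_Ioc fun s hs => ?_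
    have hs0 : (0:ℝ) ≤ s := hs.1.le
    have hts : (0:ℝ) ≤ t - s := sub_nonneg.2 hs.2
    rw [Complex.ofReal_mul, Complex.ofReal_cpow hts, Complex.ofReal_cpow hs0]
    push_cast; ring
  have htpow : ((t : ℂ)) ^ ((b : ℂ) + (a : ℂ) - 1) = ((t ^ (a + b - 1) : ℝ) : ℂ) := by
    rw [show ((b:ℂ)+(a:ℂ)-1) = ((a+b-1 : ℝ) : ℂ) by push_cast; ring, Complex.ofReal_cpow ht.le]
  have := hint.trans (hsc.trans (by rw [hbeta, htpow, ← Complex.ofReal_mul, mul_comm]))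
  exact_mod_cast this

/-- Bound on the perturbation iterates of the fractional sine family:
`‖S_n(t)x‖ ≤ M^{n+1} K_t^n e^{ωt} (t^{nα+1}/Γ(nα+2)) ‖x‖`. -/
theorem sine_iterate_bound {X : Type*} [NormedAddCommGroup X] [NormedSpace ℝ X]
    [CompleteSpace X] (α M ω : ℝ) (hα1 : 1 < α) (hα2 : α ≤ 2) (hM : 1 ≤ M) (hω : 0 ≤ ω)
    (T B : ℝ → X →L[ℝ] X) (S : ℕ → ℝ → X →L[ℝ] X)
    (hTcont : ∀ x : X, ContinuousOn (fun t => T t x) (Set.Ici 0))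
    (hBcont : ∀ x : X, ContinuousOn (fun t => B t x) (Set.Ici 0))
    (hS0cont : ∀ x : X, ContinuousOn (fun t => S 0 t x) (Set.Ici 0))
    (hTbd : ∀ t : ℝ, 0 ≤ t → ‖T t‖ ≤ M * Real.exp (ω * t) * t ^ (α - 1) / Real.Gamma α)
    (hS0bd : ∀ t : ℝ, 0 ≤ t → ‖S 0 t‖ ≤ M * t * Real.exp (ω * t))
    (hrec : ∀ (n : ℕ) (t : ℝ) (x : X),
      S (n + 1) t x = ∫ s in (0:ℝ)..t, T (t - s) (B s (S n s x)))
    (n : ℕ) (t : ℝ) (ht : 0 ≤ t) (x : X) :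
    ‖S n t x‖ ≤ M ^ (n + 1) * (sSup ((fun s => ‖B s‖) '' Set.Icc 0 t)) ^ n *
      Real.exp (ω * t) * (t ^ ((n : ℝ) * α + 1) / Real.Gamma ((n : ℝ) * α + 2)) * ‖x‖ := by
  have hα0 : (0:ℝ) < α := by linarith
  induction n generalizing t with
  | zero =>
    have h0 : ‖S 0 t x‖ ≤ M * t * Real.exp (ω * t) * ‖x‖ :=
      le_trans ((S 0 t).le_opNorm x)
        (mul_le_mul_of_nonneg_right (hS0bd t ht) (norm_nonneg x))
    simp only [pow_one, pow_zero, mul_one, Nat.cast_zero, zero_mul, zero_add]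
    rw [Real.rpow_one, Real.Gamma_two, div_one]
    calc ‖S 0 t x‖ ≤ M * t * Real.exp (ω * t) * ‖x‖ := h0
      _ = M * Real.exp (ω * t) * t * ‖x‖ := by ring
  | succ n ih =>
    set K := sSup ((fun s => ‖B s‖) '' Set.Icc 0 t) with hKdef
    rcases ht.eq_or_lt with hteq | htpos
    · -- t = 0
      subst hteq
      rw [hrec, intervalIntegral.integral_same, norm_zero]
      have hq : (0:ℝ) < ((n+1 : ℕ) : ℝ) * α + 1 := by positivity
      rw [Real.zero_rpow hq.ne', zero_div, mul_zero, zero_mul]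
    · -- t > 0
      have hΓα : 0 < Real.Gamma α := Real.Gamma_pos_of_pos hα0
      have hΓn : 0 < Real.Gamma ((n:ℝ) * α + 2) := Real.Gamma_pos_of_pos (by positivity)
      -- Banach–Steinhaus: B is uniformly bounded on [0,t]
      have hKbdd : BddAbove ((fun s => ‖B s‖) '' Set.Icc 0 t) := by
        obtain ⟨C, hC⟩ := banach_steinhaus (g := fun s : Set.Icc (0:ℝ) t => B s)
          (fun y => by
            have hcont : ContinuousOn (fun s => ‖B s y‖) (Set.Icc 0 t) :=
              ((hBcont y).mono Set.Icc_subset_Ici_self).norm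
            obtain ⟨C, hC⟩ := (isCompact_Icc.image_of_continuousOn hcont).bddAbove
            exact ⟨C, fun i => hC ⟨i.1, i.2, rfl⟩⟩)
        exact ⟨C, by rintro _ ⟨s, hs, rfl⟩; exact hC ⟨s, hs⟩⟩
      have hKmem : ∀ s ∈ Set.Icc (0:ℝ) t, ‖B s‖ ≤ K := fun s hs => le_csSup hKbdd ⟨s, hs, rfl⟩
      have hK0 : 0 ≤ K := le_trans (norm_nonneg (B 0)) (hKmem 0 ⟨le_refl 0, ht⟩)
      -- the comparison function
      set C' : ℝ := M ^ (n+2) * K ^ (n+1) * Real.exp (ω * t) * ‖x‖ /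
        (Real.Gamma α * Real.Gamma ((n:ℝ) * α + 2)) with hC'def
      set g : ℝ → ℝ := fun s => C' * ((t - s) ^ (α - 1) * s ^ ((n:ℝ) * α + 1)) with hgdef
      -- pointwise bound on (0, t]
      have hpt : ∀ s ∈ Set.Ioc (0:ℝ) t, ‖T (t - s) (B s (S n s x))‖ ≤ g s := by
        intro s hs
        have hs0 : (0:ℝ) ≤ s := hs.1.le
        have hts : (0:ℝ) ≤ t - s := sub_nonneg.2 hs.2
        have hKs0 : 0 ≤ sSup ((fun s => ‖B s‖) '' Set.Icc 0 s) := by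
          refine le_trans (norm_nonneg (B 0)) (le_csSup ?_ ⟨0, ⟨le_refl 0, hs0⟩, rfl⟩)
          exact hKbdd.mono (Set.image_mono (Set.Icc_subset_Icc_right hs.2))
        have hKsK : sSup ((fun s => ‖B s‖) '' Set.Icc 0 s) ≤ K :=
          csSup_le_csSup hKbdd ⟨‖B 0‖, ⟨0, ⟨le_refl 0, hs0⟩, rfl⟩⟩
            (Set.image_mono (Set.Icc_subset_Icc_right hs.2))
        have h3 : ‖S n s x‖ ≤ M ^ (n+1) * K ^ n * Real.exp (ω * s) *
            (s ^ ((n:ℝ) * α + 1) / Real.Gamma ((n:ℝ) * α + 2)) * ‖x‖ := by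
          refine (ih s hs0).trans ?_
          exact mul_le_mul_of_nonneg_right (mul_le_mul_of_nonneg_right
            (mul_le_mul_of_nonneg_right
              (mul_le_mul_of_nonneg_left (pow_le_pow_left₀ hKs0 hKsK n) (by positivity))
              (Real.exp_nonneg _))
            (div_nonneg (Real.rpow_nonneg hs0 _) hΓn.le)) (norm_nonneg x)
        have h2 : ‖B s (S n s x)‖ ≤ K * (M ^ (n+1) * K ^ n * Real.exp (ω * s) *
            (s ^ ((n:ℝ) * α + 1) / Real.Gamma ((n:ℝ) * α + 2)) * ‖x‖) :=
          le_trans ((B s).le_opNorm _)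
            (mul_le_mul (hKmem s ⟨hs0, hs.2⟩) h3 (norm_nonneg _) hK0)
        have h1 : ‖T (t - s)‖ ≤ M * Real.exp (ω * (t - s)) * (t-s) ^ (α - 1) / Real.Gamma α :=
          hTbd _ hts
        calc ‖T (t - s) (B s (S n s x))‖ ≤ ‖T (t - s)‖ * ‖B s (S n s x)‖ :=
              (T (t - s)).le_opNorm _
          _ ≤ (M * Real.exp (ω * (t - s)) * (t-s) ^ (α - 1) / Real.Gamma α) *
              (K * (M ^ (n+1) * K ^ n * Real.exp (ω * s) *
                (s ^ ((n:ℝ) * α + 1) / Real.Gamma ((n:ℝ) * α + 2)) * ‖x‖)) := by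
              refine mul_le_mul h1 h2 (norm_nonneg _) ?_
              exact div_nonneg (by positivity) hΓα.le
          _ = g s := by
              have hexp : Real.exp (ω * (t - s)) * Real.exp (ω * s) = Real.exp (ω * t) := by
                rw [← Real.exp_add]; congr 1; ring
              rw [hgdef, hC'def, ← hexp]
              field_simp
              try ring
      -- integrability of g
      have hgc : Continuous g := by
        have h1 : Continuous fun s : ℝ => (t - s) ^ (α - 1) :=
          (cont_rpow_aux (by linarith)).comp (continuous_const.sub continuous_id)
        have h2 : Continuous fun s : ℝ => s ^ ((n:ℝ) * α + 1) :=
          cont_rpow_aux (by positivity)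
        exact continuous_const.mul (h1.mul h2)
      have hbd := intervalIntegral.norm_integral_le_abs_of_norm_le
        (f := fun s => T (t - s) (B s (S n s x))) (μ := MeasureTheory.volume) (a := 0) (b := t)
        (Filter.eventually_of_mem (MeasureTheory.self_mem_ae_restrict measurableSet_uIoc)
          (fun s hs => hpt s (by rwa [Set.uIoc_of_le ht] at hs)))
        (hgc.intervalIntegrable 0 t)
      have hbeta : ∫ s in (0:ℝ)..t, (t - s) ^ (α - 1) * s ^ ((n:ℝ) * α + 1) =
          Real.Gamma α * Real.Gamma ((n:ℝ)*α+2) / Real.Gamma (α + ((n:ℝ)*α+2)) *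
            t ^ (α + ((n:ℝ)*α+2) - 1) := by
        rw [show (n:ℝ)*α+1 = (n:ℝ)*α+2-1 by ring]
        exact real_beta hα0 (by positivity) htpos
      have hgint : ∫ s in (0:ℝ)..t, g s = C' * (Real.Gamma α * Real.Gamma ((n:ℝ)*α+2) /
          Real.Gamma (α + ((n:ℝ)*α+2)) * t ^ (α + ((n:ℝ)*α+2) - 1)) := by
        rw [hgdef, intervalIntegral.integral_const_mul, hbeta]
      have hΓs : 0 < Real.Gamma (α + ((n:ℝ)*α+2)) := Real.Gamma_pos_of_pos (by positivity)
      have hval : C' * (Real.Gamma α * Real.Gamma ((n:ℝ)*α+2) /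
          Real.Gamma (α + ((n:ℝ)*α+2)) * t ^ (α + ((n:ℝ)*α+2) - 1)) =
          M ^ (n+2) * K ^ (n+1) * Real.exp (ω * t) *
            (t ^ (((n:ℝ)+1) * α + 1) / Real.Gamma (((n:ℝ)+1) * α + 2)) * ‖x‖ := by
        rw [hC'def, show α + ((n:ℝ)*α+2) - 1 = ((n:ℝ)+1)*α+1 by ring,
          show α + ((n:ℝ)*α+2) = ((n:ℝ)+1)*α+2 by ring]
        have hΓs' : 0 < Real.Gamma (((n:ℝ)+1)*α+2) := Real.Gamma_pos_of_pos (by positivity)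
        field_simp
      have hnn : 0 ≤ ∫ s in (0:ℝ)..t, g s := by
        rw [hgint, hval]
        have := Real.rpow_nonneg ht (((n:ℝ)+1) * α + 1)
        have hΓs' : 0 < Real.Gamma (((n:ℝ)+1)*α+2) := Real.Gamma_pos_of_pos (by positivity)
        positivity
      rw [hrec]
      refine hbd.trans ?_
      rw [abs_of_nonneg hnn, hgint, hval]
      push_cast
      ring_nf
      exact le_refl _
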